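/- Let β : X → Y be a continuous map of locally compact Hausdorff spaces with X σ-compact, and let ν be a positive bounded Radon measure on Y concentrated on β(X) (the complement of β(X) is locally ν-null). Then there exists a positive Radon measure μ on X with ν = β(μ) (pushforward). -/

import Mathlib

open MeasureTheory
open scoped ENNReal

open MeasureTheory Set Function TopologicalSpace
open scoped ENNReal NNReal

set_option maxHeartbeats 1000000

section Kernel

variable {K : Type*} [TopologicalSpace K] [CompactSpace K] [T2Space K]
  [MeasurableSpace K] [BorelSpace K]
  {L : Type*} [TopologicalSpace L] [CompactSpace L] [T2Space L]
  [MeasurableSpace L] [BorelSpace L]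

/-- Pushforward surjectivity for continuous surjections of compact Hausdorff spaces:
any finite measure on `L` that is inner regular (wrt compacts) on open sets is the
pushforward of some measure on `K`. -/
theorem exists_map_eq_of_compact_surj (π : K → L) (hπc : Continuous π)
    (hπs : Function.Surjective π) (ρ : Measure L) [IsFiniteMeasure ρ]
    (hreg : ∀ V : Set L, IsOpen V → ∀ r : ℝ≥0∞, r < ρ V →
      ∃ C, C ⊆ V ∧ IsCompact C ∧ r < ρ C) :
    ∃ σ : Measure K, σ.map π = ρ := by
  rcases eq_or_ne ρ 0 with rfl | hρ0
  · exact ⟨0, Measure.map_zero _⟩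
  have hLne : Nonempty L := by
    by_contra h
    rw [not_nonempty_iff] at h
    exact hρ0 (by ext s hs; simp [Set.eq_empty_of_isEmpty s])
  have hKne : Nonempty K := ⟨(hπs (Classical.arbitrary L)).choose⟩
  set M : ℝ := (ρ univ).toReal with hM_def
  have hM : 0 < M :=
    ENNReal.toReal_pos (by simpa [Measure.measure_univ_eq_zero] using hρ0) (measure_ne_top _ _)
  -- the composition operator `T g = g ∘ π`
  set πc : C(K, L) := ⟨π, hπc⟩ with hπc_def
  set T : C(L, ℝ) →ₗ[ℝ] C(K, ℝ) :=
    { toFun := fun g => g.comp πc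
      map_add' := fun g g' => by ext x; simp
      map_smul' := fun c g => by ext x; simp } with hT_def
  have hT_apply : ∀ (g : C(L, ℝ)) (x : K), T g x = g (π x) := fun g x => rfl
  have hTnorm : ∀ g : C(L, ℝ), ‖T g‖ = ‖g‖ := by
    intro g
    refine le_antisymm ?_ ?_
    · exact (ContinuousMap.norm_le _ (norm_nonneg g)).2 fun x => g.norm_coe_le_norm (π x)
    · refine (ContinuousMap.norm_le _ (norm_nonneg (T g))).2 fun y => ?_
      obtain ⟨x, rfl⟩ := hπs y
      exact (T g).norm_coe_le_norm x
  have hTinj : Function.Injective T := by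
    intro g g' h
    ext y
    obtain ⟨x, rfl⟩ := hπs y
    exact DFunLike.congr_fun h x
  set e : C(L, ℝ) ≃ₗ[ℝ] LinearMap.range T := LinearEquiv.ofInjective T hTinj with he_def
  have hint : ∀ g : C(L, ℝ), Integrable g ρ := fun g =>
    (map_continuous g).integrable_of_hasCompactSupport (isClosed_tsupport _).isCompact
  set ψ : C(L, ℝ) →ₗ[ℝ] ℝ :=
    { toFun := fun g => ∫ y, g y ∂ρ
      map_add' := fun g g' => integral_add (hint g) (hint g')
      map_smul' := fun c g => integral_smul c _ } with hψ_def
  set A : (LinearMap.range T) →ₗ[ℝ] ℝ := ψ.comp e.symm.toLinearMap with hA_def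
  have hA_eg : ∀ g : C(L, ℝ), A (e g) = ∫ y, g y ∂ρ := by
    intro g
    simp [hA_def, LinearEquiv.symm_apply_apply, hψ_def]
  have he_coe : ∀ g : C(L, ℝ), ((e g : LinearMap.range T) : C(K, ℝ)) = T g := fun g => rfl
  have hAbound : ∀ m : LinearMap.range T, ‖A m‖ ≤ M * ‖m‖ := by
    intro m
    obtain ⟨g, rfl⟩ : ∃ g, e g = m := ⟨e.symm m, e.apply_symm_apply m⟩
    rw [hA_eg]
    have h1 : ‖∫ y, g y ∂ρ‖ ≤ ‖g‖ * (ρ univ).toReal :=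
      norm_integral_le_of_norm_le_const (Filter.Eventually.of_forall fun y => g.norm_coe_le_norm y)
    have h2 : ‖e g‖ = ‖g‖ := by
      calc ‖e g‖ = ‖((e g : LinearMap.range T) : C(K, ℝ))‖ := rfl
        _ = ‖T g‖ := by rw [he_coe]
        _ = ‖g‖ := hTnorm g
    rw [h2]
    linarith [h1]
  set f : (LinearMap.range T) →L[ℝ] ℝ := LinearMap.mkContinuous A M hAbound with hf_def
  obtain ⟨Φ, hΦext, hΦnorm⟩ := exists_extension_norm_eq (𝕜 := ℝ) (LinearMap.range T) f
  have hΦT : ∀ g : C(L, ℝ), Φ (T g) = ∫ y, g y ∂ρ := by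
    intro g
    have := hΦext (e g)
    rw [he_coe] at this
    rw [this]
    exact hA_eg g
  have hΦ1 : Φ 1 = M := by
    have h1 : T 1 = 1 := by ext x; simp [hT_apply]
    have := hΦT 1
    rw [h1] at this
    simpa [hM_def, Measure.real] using this
  have hΦle : ‖Φ‖ ≤ M := by
    rw [hΦnorm]
    exact ContinuousLinearMap.opNorm_le_bound _ hM.le hAbound
  -- positivity of `Φ`
  have hpos : ∀ h : C(K, ℝ), (0 : C(K, ℝ)) ≤ h → 0 ≤ Φ h := by
    intro h h0
    have h0' : ∀ x, 0 ≤ h x := fun x => h0 x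
    set c := ‖h‖ with hc_def
    have hxc : ∀ x, h x ≤ c := fun x => (Real.le_norm_self _).trans (h.norm_coe_le_norm x)
    have key : ‖c • (1 : C(K, ℝ)) - (2:ℝ) • h‖ ≤ c := by
      refine (ContinuousMap.norm_le _ (norm_nonneg h)).2 fun x => ?_
      simp only [ContinuousMap.sub_apply, ContinuousMap.smul_apply, ContinuousMap.one_apply,
        smul_eq_mul, mul_one, Real.norm_eq_abs]
      rw [abs_le]
      constructor <;> nlinarith [h0' x, hxc x]
    have hb := Φ.le_opNorm (c • (1 : C(K, ℝ)) - (2:ℝ) • h)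
    have hΦval : Φ (c • (1 : C(K, ℝ)) - (2:ℝ) • h) = c * M - 2 * Φ h := by
      rw [Φ.map_sub, Φ.map_smul, Φ.map_smul, hΦ1]
      simp only [smul_eq_mul]
    have habs : |c * M - 2 * Φ h| ≤ M * c := by
      rw [← Real.norm_eq_abs, ← hΦval]
      calc ‖Φ (c • (1 : C(K, ℝ)) - (2:ℝ) • h)‖ ≤ ‖Φ‖ * ‖c • (1 : C(K, ℝ)) - (2:ℝ) • h‖ := hb
        _ ≤ M * c := by
            apply mul_le_mul hΦle key (norm_nonneg _) hM.le
    rw [abs_le] at habs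
    linarith [habs.2]
  -- the content associated to `Φ`
  set Feas : Set K → Set C(K, ℝ) := fun D => {f : C(K, ℝ) | 0 ≤ f ∧ ∀ x ∈ D, 1 ≤ f x}
    with hFeas_def
  have hfeas_one : ∀ D : Set K, (1 : C(K, ℝ)) ∈ Feas D := fun D =>
    ⟨fun x => zero_le_one, fun x _ => le_refl 1⟩
  set F : Set K → ℝ := fun D => sInf (Φ '' Feas D) with hF_def
  have hne : ∀ D : Set K, (Φ '' Feas D).Nonempty := fun D => ⟨Φ 1, 1, hfeas_one D, rfl⟩
  have hbdd : ∀ D : Set K, BddBelow (Φ '' Feas D) := by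
    intro D
    exact ⟨0, by rintro r ⟨f, hf, rfl⟩; exact hpos f hf.1⟩
  have hF0 : ∀ D : Set K, 0 ≤ F D := fun D =>
    le_csInf (hne D) (by rintro r ⟨f, hf, rfl⟩; exact hpos f hf.1)
  have hFle : ∀ (D : Set K) (f : C(K, ℝ)), f ∈ Feas D → F D ≤ Φ f := fun D f hf =>
    csInf_le (hbdd D) ⟨f, hf, rfl⟩
  have hleF : ∀ (D : Set K) (c : ℝ), (∀ f ∈ Feas D, c ≤ Φ f) → c ≤ F D := fun D c hc =>
    le_csInf (hne D) (by rintro r ⟨f, hf, rfl⟩; exact hc f hf)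
  have hFmono : ∀ D₁ D₂ : Set K, D₁ ⊆ D₂ → F D₁ ≤ F D₂ := by
    intro D₁ D₂ hsub
    refine le_csInf (hne D₂) ?_
    rintro r ⟨f, hf, rfl⟩
    exact hFle D₁ f ⟨hf.1, fun x hx => hf.2 x (hsub hx)⟩
  have hFsup_le : ∀ D₁ D₂ : Set K, F (D₁ ∪ D₂) ≤ F D₁ + F D₂ := by
    intro D₁ D₂
    refine le_of_forall_pos_le_add fun ε hε => ?_
    obtain ⟨r₁, ⟨f₁, hf₁, rfl⟩, hr₁⟩ :=
      exists_lt_of_csInf_lt (hne D₁) (lt_add_of_pos_right (F D₁) (half_pos hε))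
    obtain ⟨r₂, ⟨f₂, hf₂, rfl⟩, hr₂⟩ :=
      exists_lt_of_csInf_lt (hne D₂) (lt_add_of_pos_right (F D₂) (half_pos hε))
    have hfeas : f₁ + f₂ ∈ Feas (D₁ ∪ D₂) := by
      constructor
      · intro x
        simpa using add_nonneg (hf₁.1 x) (hf₂.1 x)
      · rintro x (hx | hx)
        · simpa using le_add_of_le_of_nonneg (hf₁.2 x hx) (hf₂.1 x)
        · simpa using le_add_of_nonneg_of_le (hf₁.1 x) (hf₂.2 x hx)
    calc F (D₁ ∪ D₂) ≤ Φ (f₁ + f₂) := hFle _ _ hfeas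
      _ = Φ f₁ + Φ f₂ := map_add Φ _ _
      _ ≤ F D₁ + F D₂ + ε := by linarith
  have hFdisj : ∀ D₁ D₂ : Set K, IsCompact D₁ → IsCompact D₂ → Disjoint D₁ D₂ →
      F (D₁ ∪ D₂) = F D₁ + F D₂ := by
    intro D₁ D₂ hD₁ hD₂ hdisj
    refine le_antisymm (hFsup_le D₁ D₂) ?_
    refine hleF _ _ ?_
    intro f hf
    obtain ⟨φ, hφ0, hφ1, hφicc⟩ :=
      exists_continuous_zero_one_of_isCompact hD₂ hD₁.isClosed hdisj.symm
    have hmul₁ : f * φ ∈ Feas D₁ := by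
      constructor
      · intro x
        simpa using mul_nonneg (hf.1 x) (hφicc x).1
      · intro x hx
        have := hφ1 hx
        simp only [ContinuousMap.mul_apply]
        rw [show φ x = 1 from this]
        simpa using hf.2 x (Or.inl hx)
    have hmul₂ : f * (1 - φ) ∈ Feas D₂ := by
      constructor
      · intro x
        show (0:ℝ) ≤ (f * (1 - φ)) x
        have h2 : (f * ((1:C(K,ℝ)) - φ)) x = f x * (1 - φ x) := by simp
        rw [h2]
        exact mul_nonneg (hf.1 x) (by linarith [(hφicc x).2])
      · intro x hx
        have h0 : φ x = 0 := hφ0 hx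
        have h2 : (f * ((1:C(K,ℝ)) - φ)) x = f x * (1 - φ x) := by simp
        show (1:ℝ) ≤ (f * (1 - φ)) x
        rw [h2, h0]
        simpa using hf.2 x (Or.inr hx)
    have hsum : f * φ + f * (1 - φ) = f := by ext x; simp; ring
    calc F D₁ + F D₂ ≤ Φ (f * φ) + Φ (f * (1 - φ)) :=
          add_le_add (hFle _ _ hmul₁) (hFle _ _ hmul₂)
      _ = Φ (f * φ + f * (1 - φ)) := (map_add Φ _ _).symm
      _ = Φ f := by rw [hsum]
  set lam : Content K :=
    { toFun := fun D => (F D).toNNReal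
      mono' := fun K₁ K₂ h => Real.toNNReal_le_toNNReal (hFmono _ _ h)
      sup_disjoint' := by
        intro K₁ K₂ hd h₁ h₂
        show (F ((K₁ ⊔ K₂ : Compacts K) : Set K)).toNNReal = _
        rw [Compacts.coe_sup, hFdisj (K₁ : Set K) (K₂ : Set K) K₁.2 K₂.2 hd, Real.toNNReal_add (hF0 _) (hF0 _)]
      sup_le' := by
        intro K₁ K₂
        show (F ((K₁ ⊔ K₂ : Compacts K) : Set K)).toNNReal ≤ _
        rw [Compacts.coe_sup, ← Real.toNNReal_add (hF0 _) (hF0 _)]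
        exact Real.toNNReal_le_toNNReal (hFsup_le _ _) } with hlam_def
  have hlam_coe : ∀ D : Compacts K, (lam D : ℝ≥0∞) = ENNReal.ofReal (F D) := fun D => rfl
  set σ : Measure K := lam.measure with hσ_def
  -- key computation : `σ (π ⁻¹' V) = ρ V` for open `V`
  have hkey : ∀ V : Set L, IsOpen V → σ (π ⁻¹' V) = ρ V := by
    intro V hV
    have hVK : IsOpen (π ⁻¹' V) := hV.preimage hπc
    rw [hσ_def, lam.measure_apply hVK.measurableSet,
      lam.outerMeasure_of_isOpen (π ⁻¹' V) hVK]
    refine le_antisymm ?_ ?_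
    · -- `≤ ρ V`
      refine iSup₂_le ?_
      rintro D hD
      have hC : IsCompact (π '' D) := D.2.image hπc
      have hCV : π '' D ⊆ V := image_subset_iff.2 hD
      obtain ⟨g₀, hg₀C, hg₀V, hg₀icc⟩ :=
        exists_continuous_zero_one_of_isCompact hC (hV.isClosed_compl)
          (disjoint_compl_right.mono_left hCV)
      set g : C(L, ℝ) := 1 - g₀ with hg
      have hg_app : ∀ y, g y = 1 - g₀ y := fun y => rfl
      have hg1C : ∀ y ∈ π '' D, g y = 1 := by
        intro y hy
        rw [hg_app, show g₀ y = 0 from hg₀C hy]; ring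
      have hg0V : ∀ y ∉ V, g y = 0 := by
        intro y hy
        rw [hg_app, show g₀ y = 1 from hg₀V hy]; ring
      have hgicc : ∀ y, g y ∈ Icc (0:ℝ) 1 := by
        intro y
        have := hg₀icc y
        rw [mem_Icc] at this ⊢
        rw [hg_app]
        constructor <;> linarith [this.1, this.2]
      have hfeas : T g ∈ Feas (D : Set K) :=
        ⟨fun x => (hgicc _).1, fun x hx => (hg1C _ (mem_image_of_mem π hx)).ge⟩
      have hgle : ∀ y, g y ≤ V.indicator (fun _ => (1:ℝ)) y := by
        intro y
        by_cases hy : y ∈ V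
        · rw [indicator_of_mem hy]; exact (hgicc y).2
        · rw [indicator_of_notMem hy, hg0V y hy]
      have hInt : Φ (T g) ≤ (ρ V).toReal := by
        rw [hΦT g]
        calc ∫ y, g y ∂ρ ≤ ∫ y, V.indicator (fun _ => (1:ℝ)) y ∂ρ :=
              integral_mono (hint g) ((integrable_const (1:ℝ)).indicator hV.measurableSet) hgle
          _ = (ρ V).toReal := by
              rw [integral_indicator_const (1:ℝ) hV.measurableSet]; simp [Measure.real]
      calc (lam D : ℝ≥0∞) = ENNReal.ofReal (F (D : Set K)) := hlam_coe D
        _ ≤ ENNReal.ofReal (Φ (T g)) := ENNReal.ofReal_le_ofReal (hFle _ _ hfeas)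
        _ ≤ ENNReal.ofReal (ρ V).toReal := ENNReal.ofReal_le_ofReal hInt
        _ = ρ V := ENNReal.ofReal_toReal (measure_ne_top ρ V)
    · -- `ρ V ≤ ...`
      refine le_of_forall_lt fun r hr => ?_
      obtain ⟨C, hCV, hCcomp, hrC⟩ := hreg V hV r hr
      obtain ⟨V', hV'open, hCV', hV'cl⟩ := normal_exists_closure_subset hCcomp.isClosed hV hCV
      obtain ⟨g₀, hg₀C, hg₀V', hg₀icc⟩ :=
        exists_continuous_zero_one_of_isCompact hCcomp (hV'open.isClosed_compl)
          (disjoint_compl_right.mono_left hCV')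
      set g : C(L, ℝ) := 1 - g₀ with hg
      have hg_app : ∀ y, g y = 1 - g₀ y := fun y => rfl
      have hg1C : ∀ y ∈ C, g y = 1 := by
        intro y hy
        rw [hg_app, show g₀ y = 0 from hg₀C hy]; ring
      have hg0V : ∀ y ∉ V', g y = 0 := by
        intro y hy
        rw [hg_app, show g₀ y = 1 from hg₀V' hy]; ring
      have hgicc : ∀ y, g y ∈ Icc (0:ℝ) 1 := by
        intro y
        have := hg₀icc y
        rw [mem_Icc] at this ⊢
        rw [hg_app]
        constructor <;> linarith [this.1, this.2]
      have hts : tsupport g ⊆ V := by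
        refine subset_trans (closure_mono ?_) hV'cl
        intro y hy
        by_contra hyV'
        exact hy (hg0V y hyV')
      set D : Set K := π ⁻¹' (tsupport g) with hD
      have hDc : IsCompact D := ((isClosed_tsupport g).preimage hπc).isCompact
      have hDV : D ⊆ π ⁻¹' V := preimage_mono hts
      have hgge : ∀ y, C.indicator (fun _ => (1:ℝ)) y ≤ g y := by
        intro y
        by_cases hy : y ∈ C
        · rw [indicator_of_mem hy, hg1C y hy]
        · rw [indicator_of_notMem hy]; exact (hgicc y).1
      have hInt : (ρ C).toReal ≤ Φ (T g) := by
        rw [hΦT g]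
        calc (ρ C).toReal = ∫ y, C.indicator (fun _ => (1:ℝ)) y ∂ρ := by
              rw [integral_indicator_const (1:ℝ) hCcomp.isClosed.measurableSet]; simp [Measure.real]
          _ ≤ ∫ y, g y ∂ρ :=
              integral_mono ((integrable_const (1:ℝ)).indicator
                hCcomp.isClosed.measurableSet) (hint g) hgge
      have hFD : Φ (T g) ≤ F D := by
        refine hleF _ _ fun f hf => ?_
        have hnn : (0 : C(K, ℝ)) ≤ f - T g := by
          rw [ContinuousMap.le_def]
          intro x
          simp only [ContinuousMap.zero_apply, ContinuousMap.sub_apply]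
          by_cases hx : x ∈ D
          · have h1 : (1:ℝ) ≤ f x := hf.2 x hx
            have h2 : T g x ≤ 1 := by rw [hT_apply]; exact (hgicc (π x)).2
            linarith
          · have h0 : g (π x) = 0 := image_eq_zero_of_notMem_tsupport hx
            have : T g x = 0 := by rw [hT_apply, h0]
            rw [this]
            simpa using hf.1 x
        have := hpos _ hnn
        rw [map_sub] at this
        linarith
      refine lt_of_lt_of_le ?_ (lam.le_innerContent ⟨D, hDc⟩ ⟨π ⁻¹' V, hVK⟩ hDV)
      calc r < ρ C := hrC
        _ = ENNReal.ofReal (ρ C).toReal := (ENNReal.ofReal_toReal (measure_ne_top _ _)).symm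
        _ ≤ ENNReal.ofReal (Φ (T g)) := ENNReal.ofReal_le_ofReal hInt
        _ ≤ ENNReal.ofReal (F D) := ENNReal.ofReal_le_ofReal hFD
        _ = (lam ⟨D, hDc⟩ : ℝ≥0∞) := (hlam_coe ⟨D, hDc⟩).symm
  -- conclusion
  have hπm : Measurable π := hπc.measurable
  have hσuniv : σ univ = ρ univ := by
    have := hkey univ isOpen_univ
    rwa [preimage_univ] at this
  haveI hfin : IsFiniteMeasure σ := ⟨by rw [hσuniv]; exact measure_lt_top ρ univ⟩
  refine ⟨σ, ?_⟩
  haveI : IsFiniteMeasure (σ.map π) :=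
    ⟨by rw [Measure.map_apply hπm MeasurableSet.univ, preimage_univ, hσuniv]
        exact measure_lt_top ρ univ⟩
  refine ext_of_generate_finite {s : Set L | IsOpen s} ?_ isPiSystem_isOpen ?_ ?_
  · rw [BorelSpace.measurable_eq (α := L)]; rfl
  · intro s hs
    rw [Measure.map_apply hπm hs.measurableSet]
    exact hkey s hs
  · rw [Measure.map_apply hπm MeasurableSet.univ, preimage_univ, hσuniv]

end Kernel

/-- **Annexe A / Proposition 1.31(b).** Let `β : X → Y` be a continuous map of
locally compact Hausdorff spaces with `X` σ-compact, and let `ν` be a positive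
bounded Radon measure on `Y` concentrated on `β(X)` (the complement of `β(X)` is
locally `ν`-null: open sets of arbitrarily small measure contain it).  Then there
is a positive measure `μ` on `X` with `ν = β(μ)`. -/
theorem exists_preimage_measure_of_concentrated
    {X : Type*} [TopologicalSpace X] [LocallyCompactSpace X] [T2Space X]
    [SigmaCompactSpace X] [MeasurableSpace X] [BorelSpace X]
    {Y : Type*} [TopologicalSpace Y] [LocallyCompactSpace Y] [T2Space Y]
    [MeasurableSpace Y] [BorelSpace Y]
    (β : X → Y) (hβ : Continuous β)
    (ν : Measure Y) [IsFiniteMeasure ν] [ν.Regular]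
    (hconc : ∀ ε : ℝ≥0∞, 0 < ε →
      ∃ Ω : Set Y, IsOpen Ω ∧ (Set.range β)ᶜ ⊆ Ω ∧ ν Ω < ε) :
    ∃ μ : Measure X, μ.map β = ν := by
  have hβm : Measurable β := hβ.measurable
  set Kc : ℕ → Set X := compactCovering X with hKc_def
  have hKc : ∀ n, IsCompact (Kc n) := isCompact_compactCovering X
  set Lset : ℕ → Set Y := fun n => β '' Kc n with hLset_def
  have hLcomp : ∀ n, IsCompact (Lset n) := fun n => (hKc n).image hβ
  have hLclosed : ∀ n, IsClosed (Lset n) := fun n => (hLcomp n).isClosed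
  have hLmeas : ∀ n, MeasurableSet (Lset n) := fun n => (hLclosed n).measurableSet
  set B : ℕ → Set Y := disjointed Lset with hB_def
  have hBmeas : ∀ n, MeasurableSet (B n) := MeasurableSet.disjointed hLmeas
  have hBdisj : Pairwise (Disjoint on B) := disjoint_disjointed Lset
  have hBsub : ∀ n, B n ⊆ Lset n := disjointed_subset Lset
  have hUL : ⋃ n, Lset n = range β := by
    rw [hLset_def, ← image_iUnion, iUnion_compactCovering, image_univ]
  have hUB : ⋃ n, B n = range β := by rw [hB_def, iUnion_disjointed, hUL]
  have hrange_meas : MeasurableSet (range β) := by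
    rw [← hUL]; exact MeasurableSet.iUnion hLmeas
  have hnull : ν (range β)ᶜ = 0 := by
    by_contra h
    obtain ⟨Ω, _, hΩsub, hΩlt⟩ := hconc (ν (range β)ᶜ) (pos_iff_ne_zero.2 h)
    exact absurd (measure_mono hΩsub) (not_le.2 hΩlt)
  -- construct, for each `n`, a measure on `X` mapping to `ν.restrict (B n)`
  have main : ∀ n : ℕ, ∃ σ : Measure X, σ.map β = ν.restrict (B n) := by
    intro n
    haveI : CompactSpace (Kc n) := isCompact_iff_compactSpace.1 (hKc n)
    haveI : CompactSpace (Lset n) := isCompact_iff_compactSpace.1 (hLcomp n)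
    set π : Kc n → Lset n := fun x => ⟨β x, mem_image_of_mem β x.2⟩ with hπ_def
    have hπc : Continuous π := Continuous.subtype_mk (hβ.comp continuous_subtype_val) _
    have hπs : Function.Surjective π := by
      rintro ⟨y, hy⟩
      obtain ⟨x, hx, rfl⟩ := hy
      exact ⟨⟨x, hx⟩, rfl⟩
    have hme : MeasurableEmbedding (Subtype.val : Lset n → Y) :=
      MeasurableEmbedding.subtype_coe (hLmeas n)
    set νB : Measure Y := ν.restrict (B n) with hνB_def
    set ρ : Measure (Lset n) := νB.comap Subtype.val with hρ_def
    haveI : IsFiniteMeasure ρ := by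
      constructor
      rw [hρ_def, hme.comap_apply]
      exact lt_of_le_of_lt (le_trans (Measure.restrict_le_self _)
        (measure_mono (subset_univ _))) (measure_lt_top ν univ)
    have hreg : ∀ V : Set (Lset n), IsOpen V → ∀ r : ℝ≥0∞, r < ρ V →
        ∃ C, C ⊆ V ∧ IsCompact C ∧ r < ρ C := by
      intro V hV r hr
      obtain ⟨W, hW, rfl⟩ := isOpen_induced_iff.1 hV
      rw [hρ_def, hme.comap_apply, Subtype.image_preimage_coe] at hr
      have hSmeas : MeasurableSet (Lset n ∩ W ∩ B n) :=
        ((hLmeas n).inter hW.measurableSet).inter (hBmeas n)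
      rw [hνB_def, Measure.restrict_apply ((hLmeas n).inter hW.measurableSet)] at hr
      obtain ⟨C, hCS, hCcomp, hrC⟩ :=
        MeasurableSet.exists_lt_isCompact_of_ne_top hSmeas (measure_ne_top ν _) hr
      have hCL : C ⊆ Lset n := fun x hx => (hCS hx).1.1
      have hCB : C ⊆ B n := fun x hx => (hCS hx).2
      have hCW : C ⊆ W := fun x hx => (hCS hx).1.2
      refine ⟨Subtype.val ⁻¹' C, ?_, ?_, ?_⟩
      · intro x hx; exact hCW hx
      · exact (hLclosed n).isClosedEmbedding_subtypeVal.isCompact_preimage hCcomp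
      · rw [hρ_def, hme.comap_apply, Subtype.image_preimage_coe,
          inter_eq_self_of_subset_right hCL, hνB_def,
          Measure.restrict_apply hCcomp.isClosed.measurableSet,
          inter_eq_self_of_subset_left hCB]
        exact hrC
    obtain ⟨σ', hσ'⟩ := exists_map_eq_of_compact_surj π hπc hπs ρ hreg
    refine ⟨σ'.map (Subtype.val : Kc n → X), ?_⟩
    rw [Measure.map_map hβm measurable_subtype_coe]
    have hcomm : β ∘ (Subtype.val : Kc n → X) = (Subtype.val : Lset n → Y) ∘ π := rfl
    rw [hcomm, ← Measure.map_map measurable_subtype_coe hπc.measurable, hσ', hρ_def,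
      hme.map_comap, Subtype.range_coe, hνB_def,
      Measure.restrict_restrict (hLmeas n), inter_eq_self_of_subset_right (hBsub n)]
  choose σ hσ using main
  refine ⟨Measure.sum σ, ?_⟩
  ext s hs
  rw [Measure.map_apply hβm hs, Measure.sum_apply _ (hβm hs)]
  have : ∀ n, σ n (β ⁻¹' s) = (ν.restrict (B n)) s := by
    intro n
    rw [← Measure.map_apply hβm hs, hσ n]
  rw [tsum_congr this, ← Measure.sum_apply _ hs, ← Measure.restrict_iUnion hBdisj hBmeas,
    hUB, Measure.restrict_eq_self_of_ae_mem]
  refine (MeasureTheory.ae_iff (p := fun x => x ∈ range β)).2 ?_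
  have : {a | ¬a ∈ range β} = (range β)ᶜ := rfl
  rw [this, hnull]
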